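/- Let D̄ be the closed unit ball in ℝⁿ, n ≥ 2, and let a₁,…,a_p be p distinct points of the open ball D, p ≥ 1. Then Y(p) = D̄ \ {a₁,…,a_p} is (p−1)-disconnected near infinity. -/

import Mathlib

open Set Metric Topology

section aux

variable {Y : Type*} [TopologicalSpace Y] {p : ℕ}

lemma aux_clopen (V : Fin p → Set Y) (hopen : ∀ i, IsOpen (V i))
    (hcover : ∀ y, ∃ i, y ∈ V i)
    (hdisj : ∀ i j, i ≠ j → Disjoint (V i) (V j)) (i : Fin p) : IsClopen (V i) := by
  refine ⟨?_, hopen i⟩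
  rw [← isOpen_compl_iff]
  have : (V i)ᶜ = ⋃ j ∈ {j | j ≠ i}, V j := by
    ext y
    simp only [mem_compl_iff, mem_iUnion, mem_setOf_eq, exists_prop]
    constructor
    · intro hy
      obtain ⟨j, hj⟩ := hcover y
      exact ⟨j, fun h => hy (h ▸ hj), hj⟩
    · rintro ⟨j, hji, hj⟩ hy
      exact Set.disjoint_left.mp (hdisj j i hji) hj hy
  rw [this]
  exact isOpen_biUnion fun j _ => hopen j

lemma aux_inj (V : Fin p → Set Y) (hopen : ∀ i, IsOpen (V i))
    (hcover : ∀ y, ∃ i, y ∈ V i)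
    (hdisj : ∀ i j, i ≠ j → Disjoint (V i) (V j)) (hne : ∀ i, (V i).Nonempty) :
    ∃ F : Fin p → ConnectedComponents Y, Function.Injective F ∧
      ∀ i c, c ∈ V i → F i = (c : ConnectedComponents Y) →
        connectedComponent c ⊆ V i := by
  choose c hc using hne
  refine ⟨fun i => (c i : ConnectedComponents Y), ?_, ?_⟩
  · intro i j hij
    rw [ConnectedComponents.coe_eq_coe] at hij
    have h1 : connectedComponent (c i) ⊆ V i :=
      (aux_clopen V hopen hcover hdisj i).connectedComponent_subset (hc i)
    have h2 : c j ∈ V i := h1 (hij ▸ mem_connectedComponent)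
    by_contra hne'
    exact Set.disjoint_left.mp (hdisj i j hne') h2 (hc j)
  · intro i x hx _
    exact (aux_clopen V hopen hcover hdisj i).connectedComponent_subset hx

lemma aux_card_le (hp : 0 < p) (V : Fin p → Set Y) (hopen : ∀ i, IsOpen (V i))
    (hcover : ∀ y, ∃ i, y ∈ V i)
    (hdisj : ∀ i j, i ≠ j → Disjoint (V i) (V j)) (hne : ∀ i, (V i).Nonempty)
    [Finite (ConnectedComponents Y)] :
    p ≤ Nat.card (ConnectedComponents Y) := by
  obtain ⟨F, hF, -⟩ := aux_inj V hopen hcover hdisj hne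
  have := Nat.card_le_card_of_injective F hF
  simpa using this

lemma aux_card_eq (V : Fin p → Set Y) (hopen : ∀ i, IsOpen (V i))
    (hcover : ∀ y, ∃ i, y ∈ V i)
    (hdisj : ∀ i j, i ≠ j → Disjoint (V i) (V j)) (hne : ∀ i, (V i).Nonempty)
    (hconn : ∀ i, IsPreconnected (V i)) :
    Nat.card (ConnectedComponents Y) = p := by
  choose c hc using hne
  have hsame : ∀ i, ∀ y ∈ V i, (y : ConnectedComponents Y) = (c i : ConnectedComponents Y) := by
    intro i y hy
    rw [ConnectedComponents.coe_eq_coe]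
    have h1 : V i ⊆ connectedComponent (c i) :=
      (hconn i).subset_connectedComponent (hc i)
    exact (connectedComponent_eq (h1 hy)).symm
  have hbij : Function.Bijective (fun i : Fin p => (c i : ConnectedComponents Y)) := by
    constructor
    · intro i j hij
      rw [ConnectedComponents.coe_eq_coe] at hij
      have h1 : connectedComponent (c i) ⊆ V i :=
        (aux_clopen V hopen hcover hdisj i).connectedComponent_subset (hc i)
      have h2 : c j ∈ V i := h1 (hij ▸ mem_connectedComponent)
      by_contra hne'
      exact Set.disjoint_left.mp (hdisj i j hne') h2 (hc j)
    · intro z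
      obtain ⟨y, rfl⟩ := ConnectedComponents.surjective_coe z
      obtain ⟨i, hi⟩ := hcover y
      exact ⟨i, (hsame i y hi).symm⟩
  have := Nat.card_eq_of_bijective _ hbij
  simpa using this.symm

end aux

lemma isPathConnected_punctured_ball {E : Type*} [NormedAddCommGroup E] [NormedSpace ℝ E]
    (h : 1 < Module.rank ℝ E) (c : E) {r : ℝ} (hr : 0 < r) :
    IsPathConnected (ball c r \ {c}) := by
  have h0 : IsPathConnected ({0}ᶜ : Set E) := isPathConnected_compl_singleton_of_one_lt_rank h 0
  have himg := h0.image (OpenPartialHomeomorph.continuous_univBall (c : E) r)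
  have heq : OpenPartialHomeomorph.univBall (c : E) r '' ({(0 : E)}ᶜ) = ball c r \ {c} := by
    apply Subset.antisymm
    · rintro _ ⟨x, hx, rfl⟩
      constructor
      · have hmem := (OpenPartialHomeomorph.univBall (c : E) r).map_source (x := x)
          (by rw [OpenPartialHomeomorph.univBall_source]; trivial)
        rwa [OpenPartialHomeomorph.univBall_target c hr] at hmem
      · simp only [mem_singleton_iff]
        intro hcx
        apply hx
        have h0s : (0 : E) ∈ (OpenPartialHomeomorph.univBall (c : E) r).source := by
          rw [OpenPartialHomeomorph.univBall_source]; trivial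
        have hxs : x ∈ (OpenPartialHomeomorph.univBall (c : E) r).source := by
          rw [OpenPartialHomeomorph.univBall_source]; trivial
        have := (OpenPartialHomeomorph.univBall (c : E) r).injOn hxs h0s
          (by rw [hcx, OpenPartialHomeomorph.univBall_apply_zero])
        simpa using this
    · rintro y ⟨hy, hy'⟩
      have hyt : y ∈ (OpenPartialHomeomorph.univBall (c : E) r).target := by
        rw [OpenPartialHomeomorph.univBall_target c hr]; exact hy
      refine ⟨(OpenPartialHomeomorph.univBall (c : E) r).symm y, ?_,
        (OpenPartialHomeomorph.univBall (c : E) r).right_inv hyt⟩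
      simp only [mem_compl_iff, mem_singleton_iff]
      intro h0'
      apply hy'
      have hri := (OpenPartialHomeomorph.univBall (c : E) r).right_inv hyt
      rw [h0', OpenPartialHomeomorph.univBall_apply_zero] at hri
      simp [← hri]
  rwa [heq] at himg

/-- A space is m-disconnected near infinity if every punctured neighborhood of
the point at infinity (set with compact complement) contains one with exactly
m+1 connected components, and m is minimal with this property. -/
def MDisconnectedNearInfinity (X : Type*) [TopologicalSpace X] (m : ℕ) : Prop :=
  (∀ P : Set X, IsCompact Pᶜ → ∃ Q : Set X, Q ⊆ P ∧ IsCompact Qᶜ ∧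
      Nat.card (ConnectedComponents Q) = m + 1) ∧
  ∀ k : ℕ, k < m → ¬ (∀ P : Set X, IsCompact Pᶜ → ∃ Q : Set X, Q ⊆ P ∧ IsCompact Qᶜ ∧
      Nat.card (ConnectedComponents Q) = k + 1)

open Set Metric Topology

set_option maxHeartbeats 1000000 in
/-- The closed unit ball of ℝⁿ (n ≥ 2) with p ≥ 1 distinct points of the open
ball removed is (p-1)-disconnected near infinity. -/
theorem stmt_15 (n : ℕ) (hn : 2 ≤ n) (p : ℕ) (hp : 1 ≤ p)
    (a : Fin p → EuclideanSpace ℝ (Fin n)) (ha : Function.Injective a)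
    (haD : ∀ i, a i ∈ Metric.ball (0 : EuclideanSpace ℝ (Fin n)) 1) :
    MDisconnectedNearInfinity
      ((Metric.closedBall (0 : EuclideanSpace ℝ (Fin n)) 1 \ Set.range a : Set (EuclideanSpace ℝ (Fin n)))) (p - 1) := by
  classical
  have hrank : 1 < Module.rank ℝ (EuclideanSpace ℝ (Fin n)) := by
    rw [← Module.finrank_eq_rank, ← Nat.cast_one, Nat.cast_lt, finrank_euclideanSpace_fin]
    omega
  have hnontriv : Nontrivial (EuclideanSpace ℝ (Fin n)) :=
    (rank_pos_iff_nontrivial (R := ℝ)).1 (lt_trans zero_lt_one hrank)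
  set Xs : Set (EuclideanSpace ℝ (Fin n)) := closedBall 0 1 \ Set.range a with hXsdef
  have hpne : (Finset.univ : Finset (Fin p × Fin p)).Nonempty := by
    refine ⟨(⟨0, hp⟩, ⟨0, hp⟩), Finset.mem_univ _⟩
  set f : Fin p × Fin p → ℝ :=
    fun ij => if ij.1 = ij.2 then 1 else dist (a ij.1) (a ij.2) with hfdef
  set r : ℝ := Finset.univ.inf' hpne f with hrdef
  have hr : 0 < r := by
    rw [hrdef, Finset.lt_inf'_iff]
    intro ij _
    rw [hfdef]
    dsimp only
    split_ifs with h
    · exact zero_lt_one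
    · exact dist_pos.mpr (fun he => h (ha he))
  have hrd : ∀ i j, i ≠ j → r ≤ dist (a i) (a j) := by
    intro i j hij
    have := Finset.inf'_le f (Finset.mem_univ (i, j))
    simpa only [hfdef, if_neg hij] using this
  -- generic compactness of complements of unions of small balls
  have hcompact : ∀ ε : Fin p → ℝ, (∀ i, 0 < ε i) →
      IsCompact ((⋃ i, (Subtype.val ⁻¹' ball (a i) (ε i) : Set Xs))ᶜ) := by
    intro ε hε
    rw [Subtype.isCompact_iff]
    have himg : Subtype.val '' (⋃ i, (Subtype.val ⁻¹' ball (a i) (ε i) : Set Xs))ᶜ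
        = closedBall (0 : EuclideanSpace ℝ (Fin n)) 1 ∩ (⋃ i, ball (a i) (ε i))ᶜ := by
      ext x
      constructor
      · rintro ⟨y, hy, rfl⟩
        refine ⟨y.2.1, ?_⟩
        intro hx
        apply hy
        rw [mem_iUnion] at hx ⊢
        obtain ⟨i, hi⟩ := hx
        exact ⟨i, hi⟩
      · rintro ⟨hx1, hx2⟩
        have hxr : x ∉ Set.range a := by
          rintro ⟨j, rfl⟩
          exact hx2 (mem_iUnion.mpr ⟨j, mem_ball_self (hε j)⟩)
        refine ⟨⟨x, hx1, hxr⟩, ?_, rfl⟩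
        intro hx
        rw [mem_iUnion] at hx
        obtain ⟨i, hi⟩ := hx
        exact hx2 (mem_iUnion.mpr ⟨i, hi⟩)
    rw [himg]
    exact (isCompact_closedBall _ _).inter_right
      (isOpen_iUnion fun i => isOpen_ball).isClosed_compl
  constructor
  · -- existence of Q with exactly p components
    intro P hP
    have hKcomp : IsCompact (Subtype.val '' Pᶜ : Set (EuclideanSpace ℝ (Fin n))) :=
      Subtype.isCompact_iff.mp hP
    have hC : ∀ i, ∃ δ > 0, ball (a i) δ ⊆
        ((Subtype.val '' Pᶜ) ∪ (ball (0 : EuclideanSpace ℝ (Fin n)) 1)ᶜ)ᶜ := by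
      intro i
      have hclosed : IsClosed ((Subtype.val '' Pᶜ) ∪ (ball (0 : EuclideanSpace ℝ (Fin n)) 1)ᶜ) :=
        hKcomp.isClosed.union isOpen_ball.isClosed_compl
      have hmem : a i ∈ ((Subtype.val '' Pᶜ) ∪ (ball (0 : EuclideanSpace ℝ (Fin n)) 1)ᶜ)ᶜ := by
        simp only [mem_compl_iff, mem_union, not_or, not_not]
        refine ⟨?_, haD i⟩
        rintro ⟨y, -, hy⟩
        exact y.2.2 ⟨i, hy.symm⟩
      exact Metric.isOpen_iff.mp hclosed.isOpen_compl _ hmem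
    choose δ hδpos hδsub using hC
    set ε : Fin p → ℝ := fun i => min (δ i) (r / 2) with hεdef
    have hεpos : ∀ i, 0 < ε i := fun i => lt_min (hδpos i) (by positivity)
    have hεr : ∀ i, ε i ≤ r / 2 := fun i => min_le_right _ _
    have hsub' : ∀ i, ∀ x ∈ ball (a i) (ε i),
        x ∉ (Subtype.val '' Pᶜ : Set (EuclideanSpace ℝ (Fin n))) ∧
          x ∈ ball (0 : EuclideanSpace ℝ (Fin n)) 1 := by
      intro i x hx
      have := hδsub i (ball_subset_ball (min_le_left _ _) hx)
      simp only [mem_compl_iff, mem_union, not_or, not_not] at this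
      exact this
    set Q : Set Xs := ⋃ i, Subtype.val ⁻¹' ball (a i) (ε i) with hQdef
    refine ⟨Q, ?_, hcompact ε hεpos, ?_⟩
    · intro x hx
      rw [hQdef, mem_iUnion] at hx
      obtain ⟨i, hi⟩ := hx
      by_contra hxP
      exact (hsub' i _ hi).1 ⟨x, hxP, rfl⟩
    · have hpp : p - 1 + 1 = p := by omega
      rw [hpp]
      set V : Fin p → Set Q :=
        fun i => (fun q : Q => ((q : Xs) : EuclideanSpace ℝ (Fin n))) ⁻¹' ball (a i) (ε i)
        with hVdef
      have hcont : Continuous (fun q : Q => ((q : Xs) : EuclideanSpace ℝ (Fin n))) :=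
        continuous_subtype_val.comp continuous_subtype_val
      have hopen : ∀ i, IsOpen (V i) := fun i => isOpen_ball.preimage hcont
      have hcover : ∀ q : Q, ∃ i, q ∈ V i := by
        intro q
        have h2 : (q : Xs) ∈ ⋃ i, (Subtype.val ⁻¹' ball (a i) (ε i) : Set Xs) := q.2
        rw [mem_iUnion] at h2
        obtain ⟨i, hi⟩ := h2
        exact ⟨i, hi⟩
      have hdisj : ∀ i j, i ≠ j → Disjoint (V i) (V j) := by
        intro i j hij
        rw [Set.disjoint_left]
        intro q hqi hqj
        have h1 : dist ((q : Xs) : EuclideanSpace ℝ (Fin n)) (a i) < ε i := mem_ball.mp hqi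
        have h2 : dist ((q : Xs) : EuclideanSpace ℝ (Fin n)) (a j) < ε j := mem_ball.mp hqj
        have h3 : dist (a i) (a j) ≤ dist ((q : Xs) : EuclideanSpace ℝ (Fin n)) (a i)
            + dist ((q : Xs) : EuclideanSpace ℝ (Fin n)) (a j) := by
          rw [dist_comm ((q : Xs) : EuclideanSpace ℝ (Fin n)) (a i)]
          exact dist_triangle _ _ _
        have := hrd i j hij
        have hεi := hεr i
        have hεj := hεr j
        linarith
      have himg2 : ∀ i, (fun q : Q => ((q : Xs) : EuclideanSpace ℝ (Fin n))) '' (V i)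
          = ball (a i) (ε i) \ {a i} := by
        intro i
        ext x
        constructor
        · rintro ⟨q, hq, rfl⟩
          refine ⟨hq, ?_⟩
          simp only [mem_singleton_iff]
          intro hxa
          exact (q : Xs).2.2 ⟨i, hxa.symm⟩
        · rintro ⟨hx, hx'⟩
          simp only [mem_singleton_iff] at hx'
          have hxr : x ∉ Set.range a := by
            rintro ⟨j, rfl⟩
            rcases eq_or_ne j i with rfl | hji
            · exact hx' rfl
            · have h1 : dist (a j) (a i) < ε i := mem_ball.mp hx
              have h2 := hrd i j (fun h => hji h.symm)
              rw [dist_comm] at h2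
              have := hεr i
              linarith
          have hx1 : x ∈ closedBall (0 : EuclideanSpace ℝ (Fin n)) 1 :=
            ball_subset_closedBall (hsub' i x hx).2
          have hxXs : x ∈ Xs := ⟨hx1, hxr⟩
          have hxQ : (⟨x, hxXs⟩ : Xs) ∈ Q := mem_iUnion.mpr ⟨i, hx⟩
          exact ⟨⟨⟨x, hxXs⟩, hxQ⟩, hx, rfl⟩
      have hconn : ∀ i, IsPreconnected (V i) := by
        intro i
        have hind : Topology.IsInducing (fun q : Q => ((q : Xs) : EuclideanSpace ℝ (Fin n))) :=
          Topology.IsInducing.subtypeVal.comp Topology.IsInducing.subtypeVal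
        rw [← hind.isPreconnected_image, himg2 i]
        exact (isPathConnected_punctured_ball hrank (a i) (hεpos i)).isConnected.isPreconnected
      have hne : ∀ i, (V i).Nonempty := by
        intro i
        have hdense : Dense ((Set.range a)ᶜ : Set (EuclideanSpace ℝ (Fin n))) :=
          ((Set.finite_range a).countable).dense_compl ℝ
        obtain ⟨x, hxc, hxb⟩ := hdense.exists_mem_open isOpen_ball
          ⟨a i, mem_ball_self (hεpos i)⟩
        have hx1 : x ∈ closedBall (0 : EuclideanSpace ℝ (Fin n)) 1 :=
          ball_subset_closedBall (hsub' i x hxb).2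
        have hxXs : x ∈ Xs := ⟨hx1, hxc⟩
        have hxQ : (⟨x, hxXs⟩ : Xs) ∈ Q := mem_iUnion.mpr ⟨i, hxb⟩
        exact ⟨⟨⟨x, hxXs⟩, hxQ⟩, hxb⟩
      have hfin : Nat.card (ConnectedComponents Q) = p :=
        aux_card_eq V hopen hcover hdisj hne hconn
      omega
  · -- minimality
    intro k hk hcontra
    set P : Set Xs := ⋃ i, Subtype.val ⁻¹' ball (a i) (r / 2) with hPdef
    obtain ⟨Q, hQP, hQc, hQcard⟩ :=
      hcontra P (hcompact (fun _ => r / 2) (fun _ => by positivity))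
    haveI : Finite (ConnectedComponents Q) :=
      Nat.finite_of_card_ne_zero (by rw [hQcard]; exact Nat.succ_ne_zero k)
    set V : Fin p → Set Q :=
      fun i => (fun q : Q => ((q : Xs) : EuclideanSpace ℝ (Fin n))) ⁻¹' ball (a i) (r / 2)
      with hVdef
    have hcont : Continuous (fun q : Q => ((q : Xs) : EuclideanSpace ℝ (Fin n))) :=
      continuous_subtype_val.comp continuous_subtype_val
    have hopen : ∀ i, IsOpen (V i) := fun i => isOpen_ball.preimage hcont
    have hcover : ∀ q : Q, ∃ i, q ∈ V i := by
      intro q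
      have h2 : (q : Xs) ∈ ⋃ i, (Subtype.val ⁻¹' ball (a i) (r / 2) : Set Xs) := hQP q.2
      rw [mem_iUnion] at h2
      obtain ⟨i, hi⟩ := h2
      exact ⟨i, hi⟩
    have hdisj : ∀ i j, i ≠ j → Disjoint (V i) (V j) := by
      intro i j hij
      rw [Set.disjoint_left]
      intro q hqi hqj
      have h1 : dist ((q : Xs) : EuclideanSpace ℝ (Fin n)) (a i) < r / 2 := mem_ball.mp hqi
      have h2 : dist ((q : Xs) : EuclideanSpace ℝ (Fin n)) (a j) < r / 2 := mem_ball.mp hqj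
      have h3 : dist (a i) (a j) ≤ dist ((q : Xs) : EuclideanSpace ℝ (Fin n)) (a i)
          + dist ((q : Xs) : EuclideanSpace ℝ (Fin n)) (a j) := by
        rw [dist_comm ((q : Xs) : EuclideanSpace ℝ (Fin n)) (a i)]
        exact dist_triangle _ _ _
      have := hrd i j hij
      linarith
    have hne : ∀ i, (V i).Nonempty := by
      intro i
      by_contra hemp
      rw [Set.not_nonempty_iff_eq_empty] at hemp
      have hKc : IsCompact (Subtype.val '' Qᶜ : Set (EuclideanSpace ℝ (Fin n))) :=
        Subtype.isCompact_iff.mp hQc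
      have hnormai : ‖a i‖ < 1 := mem_ball_zero_iff.mp (haD i)
      have hclos : a i ∈ closure (Subtype.val '' Qᶜ : Set (EuclideanSpace ℝ (Fin n))) := by
        rw [Metric.mem_closure_iff]
        intro ε' hε'
        have hδ : 0 < min (min ε' (r / 2)) (1 - ‖a i‖) := by
          refine lt_min (lt_min hε' (by positivity)) (by linarith)
        have hdense : Dense ((Set.range a)ᶜ : Set (EuclideanSpace ℝ (Fin n))) :=
          ((Set.finite_range a).countable).dense_compl ℝ
        obtain ⟨x, hxc, hxb⟩ := hdense.exists_mem_open isOpen_ball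
          ⟨a i, mem_ball_self hδ⟩
        have hxd : dist x (a i) < min (min ε' (r / 2)) (1 - ‖a i‖) := mem_ball.mp hxb
        have hx1 : x ∈ closedBall (0 : EuclideanSpace ℝ (Fin n)) 1 := by
          rw [mem_closedBall_zero_iff]
          have h4 : ‖x - a i‖ < 1 - ‖a i‖ := lt_of_lt_of_le hxd (min_le_right _ _)
          calc ‖x‖ = ‖x - a i + a i‖ := by rw [sub_add_cancel]
          _ ≤ ‖x - a i‖ + ‖a i‖ := norm_add_le _ _
          _ ≤ 1 := by linarith
        have hxXs : x ∈ Xs := ⟨hx1, hxc⟩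
        have hxP : (⟨x, hxXs⟩ : Xs) ∉ Q := by
          intro hxQ
          rw [Set.eq_empty_iff_forall_notMem] at hemp
          exact hemp ⟨⟨x, hxXs⟩, hxQ⟩ (show x ∈ ball (a i) (r / 2) from
            mem_ball.mpr (lt_of_lt_of_le hxd ((min_le_left _ _).trans (min_le_right _ _))))
        refine ⟨x, ⟨⟨x, hxXs⟩, hxP, rfl⟩, ?_⟩
        rw [dist_comm]
        exact lt_of_lt_of_le hxd ((min_le_left _ _).trans (min_le_left _ _))
      rw [hKc.isClosed.closure_eq] at hclos
      obtain ⟨y, -, hy⟩ := hclos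
      exact y.2.2 ⟨i, hy.symm⟩
    have hcard_le := aux_card_le (by omega) V hopen hcover hdisj hne
    omega
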